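/- Deterministic score-function robustness (core of Theorem 1): let E be a real normed vector space, K ≥ 2 a natural number, ε̂, δ̂ ≥ 0, and g : E → Fin K → ℝ a family of score functions with 0 ≤ g i x ≤ 1 for all i and x, satisfying the DP-type stability property: for all x, x' with ‖x - x'‖ ≤ 1 and all i : Fin K, g i x ≤ exp ε̂ * g i x' + δ̂. If for some x and some c : Fin K, g c x > exp(2*ε̂) * (max over i ≠ c of g i x) + (1 + exp ε̂) * δ̂, then for every α with ‖α‖ ≤ 1 and every i ≠ c, g c (x + α) > g i (x + α). -/

import Mathlib

/-- Deterministic score-function robustness (core of Theorem 1): a family of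
`[0, 1]`-valued score functions with the DP-type stability property predicts
the same label on all points within distance `1` of `x`, provided the score of
the label `c` at `x` dominates the others by the stated margin. -/
theorem score_function_robustness
    {E : Type*} [NormedAddCommGroup E] [NormedSpace ℝ E]
    (K : ℕ) (hK : 2 ≤ K) (εh δh : ℝ) (hε : 0 ≤ εh) (hδ : 0 ≤ δh)
    (g : Fin K → E → ℝ)
    (hg0 : ∀ i x, 0 ≤ g i x) (hg1 : ∀ i x, g i x ≤ 1)
    (hstab : ∀ x x' : E, ‖x - x'‖ ≤ 1 → ∀ i : Fin K,
      g i x ≤ Real.exp εh * g i x' + δh)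
    (x : E) (c : Fin K)
    (hgap : g c x >
      Real.exp (2 * εh) *
        ((Finset.univ.erase c).sup'
          (by
            obtain ⟨i, hi⟩ :=
              Fintype.exists_ne_of_one_lt_card (by simpa using (show 1 < K by omega)) c
            exact ⟨i, Finset.mem_erase.mpr ⟨hi, Finset.mem_univ i⟩⟩)
          fun i => g i x)
        + (1 + Real.exp εh) * δh) :
    ∀ α : E, ‖α‖ ≤ 1 → ∀ i : Fin K, i ≠ c → g c (x + α) > g i (x + α) := by
  intro α hα i hic
  have hne : ((Finset.univ.erase c)).Nonempty := by
    exact ⟨i, Finset.mem_erase.mpr ⟨hic, Finset.mem_univ i⟩⟩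
  set M := (Finset.univ.erase c).sup' hne (fun i => g i x) with hM
  have hMle : g i x ≤ M :=
    Finset.le_sup' (fun j => g j x) (Finset.mem_erase.mpr ⟨hic, Finset.mem_univ i⟩)
  have h1 : g i (x + α) ≤ Real.exp εh * g i x + δh := by
    have := hstab (x + α) x (by simpa using hα) i
    simpa using this
  have h2 : g c x ≤ Real.exp εh * g c (x + α) + δh := by
    have := hstab x (x + α) (by simpa [norm_sub_rev] using hα) c
    simpa using this
  have hexp : (0:ℝ) < Real.exp εh := Real.exp_pos _
  have key : Real.exp εh * (Real.exp εh * g i x + δh) + δh < g c x := by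
    have : Real.exp εh * (Real.exp εh * g i x + δh) + δh
        ≤ Real.exp (2*εh) * M + (1 + Real.exp εh) * δh := by
      have h2e : Real.exp (2*εh) = Real.exp εh * Real.exp εh := by
        rw [two_mul, Real.exp_add]
      rw [h2e]
      have h3 : Real.exp εh * Real.exp εh * g i x ≤ Real.exp εh * Real.exp εh * M :=
        mul_le_mul_of_nonneg_left hMle (mul_pos hexp hexp).le
      nlinarith
    linarith
  have h4 : Real.exp εh * g i (x + α) ≤ Real.exp εh * (Real.exp εh * g i x + δh) :=
    mul_le_mul_of_nonneg_left h1 hexp.le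
  have h5 : Real.exp εh * g i (x + α) < Real.exp εh * g c (x + α) := by linarith
  exact lt_of_mul_lt_mul_left h5 hexp.le
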